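/- Let n ≥ 1 and let f : ℝⁿ → ℝ be a C² function such that for some constants c ≥ 0 and C > 0: f(x) ≥ ¼(|x| − c)² for all x with |x| ≥ c, |∇f(x)| ≤ C(1 + |x|) for all x, and |Δf(x)| ≤ C(1 + |x|²) for all x. Then the functions Δf·e^{−f} and |∇f|²·e^{−f} are integrable on ℝⁿ and ∫_{ℝⁿ} Δf(x) e^{−f(x)} dx = ∫_{ℝⁿ} |∇f(x)|² e^{−f(x)} dx. -/

import Mathlib

open MeasureTheory

set_option maxHeartbeats 1000000

section auxiliary

open Real

lemma aux_gauss_int (n : ℕ) :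
    Integrable (fun x : EuclideanSpace ℝ (Fin n) => Real.exp (-(1/16) * ‖x‖^2)) := by
  have h := (GaussianFourier.integrable_cexp_neg_mul_sq_norm_add
    (V := EuclideanSpace ℝ (Fin n)) (b := (1/16:ℂ)) (by norm_num) 0 0).norm
  apply h.congr
  filter_upwards with x
  rw [Complex.norm_exp]
  norm_num
  norm_cast

variable {E : Type*} [NormedAddCommGroup E] [NormedSpace ℝ E] [MeasurableSpace E]
  [BorelSpace E] [FiniteDimensional ℝ E] {μ : Measure E} [μ.IsAddHaarMeasure]

lemma aux_integral_fderiv_eq_zero {u : E → ℝ} (hu : Differentiable ℝ u)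
    (hui : Integrable u μ) {v : E} (hu' : Integrable (fun x => fderiv ℝ u x v) μ) :
    ∫ x, fderiv ℝ u x v ∂μ = 0 := by
  have h := integral_mul_fderiv_eq_neg_fderiv_mul_of_integrable
    (f := u) (g := fun _ => (1:ℝ)) (v := v) (μ := μ)
    (by simpa using hu') (by simp) (by simpa using hui) (fun x _ => hu x) (fun x _ => differentiableAt_const 1)
  simp at h
  linarith

lemma aux_integral_fderiv_eq_zero' {u : E → ℝ} (hu : ContDiff ℝ 1 u)
    (hcs : HasCompactSupport u) (v : E) :
    ∫ x, fderiv ℝ u x v ∂μ = 0 := by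
  apply aux_integral_fderiv_eq_zero (hu.differentiable one_ne_zero)
    (hu.continuous.integrable_of_hasCompactSupport hcs)
  exact (((hu.continuous_fderiv one_ne_zero).clm_apply continuous_const).integrable_of_hasCompactSupport
    (hcs.fderiv_apply ℝ v))

end auxiliary

/-- The Laplacian of a function on Euclidean space, as the trace of its second derivative. -/
noncomputable def euclideanLaplacian {n : ℕ} (f : EuclideanSpace ℝ (Fin n) → ℝ)
    (x : EuclideanSpace ℝ (Fin n)) : ℝ :=
  ∑ i : Fin n, iteratedFDeriv ℝ 2 f x ![EuclideanSpace.single i 1, EuclideanSpace.single i 1]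

section keylemma

lemma aux_lap_eq {n : ℕ} {f : EuclideanSpace ℝ (Fin n) → ℝ} (hf : ContDiff ℝ 2 f)
    (x : EuclideanSpace ℝ (Fin n)) :
    euclideanLaplacian f x = ∑ i : Fin n,
      fderiv ℝ (fun y => fderiv ℝ f y (EuclideanSpace.single i 1)) x
        (EuclideanSpace.single i 1) := by
  have hfC1 : ContDiff ℝ 1 (fderiv ℝ f) := hf.fderiv_right (by norm_num)
  unfold euclideanLaplacian
  refine Finset.sum_congr rfl fun i _ => ?_
  rw [iteratedFDeriv_two_apply]
  have hdiff : DifferentiableAt ℝ (fderiv ℝ f) x := (hfC1.differentiable one_ne_zero) x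
  have : fderiv ℝ (fun y => (fderiv ℝ f y) (EuclideanSpace.single i 1)) x
      = (fderiv ℝ (fderiv ℝ f) x).flip (EuclideanSpace.single i 1) := by
    rw [fderiv_clm_apply hdiff (differentiableAt_const _)]
    simp
  rw [this]
  simp

lemma aux_grad_inner {n : ℕ} (f : EuclideanSpace ℝ (Fin n) → ℝ)
    (x : EuclideanSpace ℝ (Fin n)) (v : EuclideanSpace ℝ (Fin n)) :
    fderiv ℝ f x v = inner ℝ (gradient f x) v := by
  rw [gradient, ← InnerProductSpace.toDual_apply_apply, LinearIsometryEquiv.apply_symm_apply]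

lemma aux_grad_abs {n : ℕ} (f : EuclideanSpace ℝ (Fin n) → ℝ)
    (x : EuclideanSpace ℝ (Fin n)) (i : Fin n) :
    |fderiv ℝ f x (EuclideanSpace.single i 1)| ≤ ‖gradient f x‖ := by
  rw [aux_grad_inner]
  have h := abs_real_inner_le_norm (gradient f x) (EuclideanSpace.single i 1)
  simpa using h

lemma aux_grad_sum_sq {n : ℕ} (f : EuclideanSpace ℝ (Fin n) → ℝ)
    (x : EuclideanSpace ℝ (Fin n)) :
    ∑ i : Fin n, fderiv ℝ f x (EuclideanSpace.single i 1) *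
      fderiv ℝ f x (EuclideanSpace.single i 1) = ‖gradient f x‖ ^ 2 := by
  rw [EuclideanSpace.norm_eq, Real.sq_sqrt (by positivity)]
  refine Finset.sum_congr rfl fun i _ => ?_
  have hcoord : fderiv ℝ f x (EuclideanSpace.single i 1) = gradient f x i := by
    rw [aux_grad_inner]
    have := EuclideanSpace.inner_single_right (𝕜 := ℝ) i 1 (gradient f x)
    simpa using this
  rw [hcoord]
  simp [sq]

lemma aux_key {n : ℕ} {f : EuclideanSpace ℝ (Fin n) → ℝ} (hf : ContDiff ℝ 2 f)
    {χ : EuclideanSpace ℝ (Fin n) → ℝ} (hχ : ContDiff ℝ 1 χ) (hχc : HasCompactSupport χ) :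
    ∫ x, χ x * (euclideanLaplacian f x * Real.exp (-(f x))) =
      (∫ x, χ x * (‖gradient f x‖ ^ 2 * Real.exp (-(f x)))) -
      ∑ i : Fin n, ∫ x, fderiv ℝ χ x (EuclideanSpace.single i 1) *
        (fderiv ℝ f x (EuclideanSpace.single i 1) * Real.exp (-(f x))) := by
  classical
  set e : Fin n → EuclideanSpace ℝ (Fin n) := fun i => EuclideanSpace.single i 1 with he
  set g : Fin n → EuclideanSpace ℝ (Fin n) → ℝ := fun i x => fderiv ℝ f x (e i) with hg
  set ψ : EuclideanSpace ℝ (Fin n) → ℝ := fun x => Real.exp (-(f x)) with hψ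
  have hfd : Differentiable ℝ f := hf.differentiable two_ne_zero
  have hfC1 : ContDiff ℝ 1 (fderiv ℝ f) := hf.fderiv_right (by norm_num)
  have hgC1 : ∀ i, ContDiff ℝ 1 (g i) := fun i => hfC1.clm_apply contDiff_const
  have hψC1 : ContDiff ℝ 1 ψ := (Real.contDiff_exp.comp hf.neg).of_le one_le_two
  have hψcont : Continuous ψ := hψC1.continuous
  have hψd : ∀ x, HasFDerivAt ψ (Real.exp (-(f x)) • (-(fderiv ℝ f x))) x := fun x => by
    have h := (Real.hasDerivAt_exp (-(f x))).comp_hasFDerivAt x ((hfd x).hasFDerivAt.neg)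
    exact h
  have hsum_sq : ∀ x : EuclideanSpace ℝ (Fin n),
      ∑ i, g i x * g i x = ‖gradient f x‖ ^ 2 := fun x => aux_grad_sum_sq f x
  have hlap_eq : ∀ x, euclideanLaplacian f x = ∑ i, fderiv ℝ (g i) x (e i) :=
    fun x => aux_lap_eq hf x
  set T1 : Fin n → EuclideanSpace ℝ (Fin n) → ℝ :=
    fun i x => fderiv ℝ χ x (e i) * (g i x * ψ x) with hT1def
  set T2 : Fin n → EuclideanSpace ℝ (Fin n) → ℝ :=
    fun i x => χ x * (fderiv ℝ (g i) x (e i) * ψ x) with hT2def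
  set T3 : Fin n → EuclideanSpace ℝ (Fin n) → ℝ :=
    fun i x => χ x * (g i x * (g i x * ψ x)) with hT3def
  have hgcont : ∀ i, Continuous (g i) := fun i => (hgC1 i).continuous
  have hcs1 : ∀ i, HasCompactSupport (T1 i) := fun i =>
    (hχc.fderiv_apply ℝ (e i)).mul_right
  have hcs2 : ∀ i, HasCompactSupport (T2 i) := fun i => hχc.mul_right
  have hcs3 : ∀ i, HasCompactSupport (T3 i) := fun i => hχc.mul_right
  have hT1i : ∀ i, Integrable (T1 i) := fun i =>
    (((hχ.continuous_fderiv one_ne_zero).clm_apply continuous_const).mul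
      ((hgcont i).mul hψcont)).integrable_of_hasCompactSupport (hcs1 i)
  have hT2i : ∀ i, Integrable (T2 i) := fun i =>
    (hχ.continuous.mul ((((hgC1 i).continuous_fderiv one_ne_zero).clm_apply continuous_const).mul
      hψcont)).integrable_of_hasCompactSupport (hcs2 i)
  have hT3i : ∀ i, Integrable (T3 i) := fun i =>
    (hχ.continuous.mul ((hgcont i).mul ((hgcont i).mul hψcont))).integrable_of_hasCompactSupport
      (hcs3 i)
  have hper : ∀ i, (∫ x, T2 i x) = (∫ x, T3 i x) - ∫ x, T1 i x := by
    intro i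
    have hFC1 : ContDiff ℝ 1 (fun x => χ x * (g i x * ψ x)) := hχ.mul ((hgC1 i).mul hψC1)
    have hFcs : HasCompactSupport (fun x => χ x * (g i x * ψ x)) := hχc.mul_right
    have h0 : ∫ x, fderiv ℝ (fun y => χ y * (g i y * ψ y)) x (e i) = 0 :=
      aux_integral_fderiv_eq_zero' hFC1 hFcs (e i)
    have hF : ∀ x, HasFDerivAt (fun y => χ y * (g i y * ψ y))
        (χ x • (g i x • (Real.exp (-(f x)) • (-(fderiv ℝ f x))) + ψ x • fderiv ℝ (g i) x)
          + (g i x * ψ x) • fderiv ℝ χ x) x := by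
      intro x
      exact ((hχ.differentiable one_ne_zero) x).hasFDerivAt.mul
        ((((hgC1 i).differentiable one_ne_zero) x).hasFDerivAt.mul (hψd x))
    have hexp : ∀ x, fderiv ℝ (fun y => χ y * (g i y * ψ y)) x (e i)
        = T1 i x + T2 i x - T3 i x := by
      intro x
      rw [(hF x).fderiv]
      simp only [ContinuousLinearMap.add_apply, ContinuousLinearMap.smul_apply,
        ContinuousLinearMap.neg_apply, smul_eq_mul, hT1def, hT2def, hT3def]
      show χ x * (g i x * (Real.exp (-(f x)) * -(g i x)) + ψ x * fderiv ℝ (g i) x (e i))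
          + g i x * ψ x * fderiv ℝ χ x (e i) = _
      have : ψ x = Real.exp (-(f x)) := rfl
      rw [this]
      ring
    have h0' : ∫ x, (T1 i x + T2 i x - T3 i x) = 0 :=
      (integral_congr_ae (Filter.Eventually.of_forall hexp)).symm.trans h0
    have ha : Integrable (fun x => T1 i x + T2 i x) := (hT1i i).add (hT2i i)
    have hsplit : ∫ x, (T1 i x + T2 i x - T3 i x) =
        (∫ x, T1 i x) + (∫ x, T2 i x) - ∫ x, T3 i x := by
      rw [integral_sub ha (hT3i i), integral_add (hT1i i) (hT2i i)]
    rw [hsplit] at h0'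
    linarith
  have hLHS : ∫ x, χ x * (euclideanLaplacian f x * ψ x) = ∑ i, ∫ x, T2 i x := by
    rw [← integral_finset_sum _ (fun i _ => hT2i i)]
    apply integral_congr_ae
    filter_upwards with x
    rw [hlap_eq x]
    simp only [hT2def]
    rw [Finset.sum_mul, Finset.mul_sum]
  have hRHS : ∫ x, χ x * (‖gradient f x‖ ^ 2 * ψ x) = ∑ i, ∫ x, T3 i x := by
    rw [← integral_finset_sum _ (fun i _ => hT3i i)]
    apply integral_congr_ae
    filter_upwards with x
    rw [← hsum_sq x]
    simp only [hT3def]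
    rw [Finset.sum_mul, Finset.mul_sum]
    exact Finset.sum_congr rfl fun i _ => by ring
  rw [hLHS, hRHS]
  rw [Finset.sum_congr rfl fun i _ => hper i]
  rw [Finset.sum_sub_distrib]

end keylemma

/-- Weighted integration by parts on `ℝⁿ`: if a `C²` potential `f` grows quadratically and
its gradient and Laplacian grow at most linearly resp. quadratically, then `Δf · e^{−f}` and
`|∇f|² · e^{−f}` are integrable and `∫ Δf e^{−f} = ∫ |∇f|² e^{−f}`. -/
theorem stmt6 (n : ℕ) (hn : 1 ≤ n) (f : EuclideanSpace ℝ (Fin n) → ℝ)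
    (hf : ContDiff ℝ 2 f) (c C : ℝ) (hc : 0 ≤ c) (hC : 0 < C)
    (hgrowth : ∀ x : EuclideanSpace ℝ (Fin n), c ≤ ‖x‖ → (1 / 4) * (‖x‖ - c) ^ 2 ≤ f x)
    (hgrad : ∀ x : EuclideanSpace ℝ (Fin n), ‖gradient f x‖ ≤ C * (1 + ‖x‖))
    (hlap : ∀ x : EuclideanSpace ℝ (Fin n), |euclideanLaplacian f x| ≤ C * (1 + ‖x‖ ^ 2)) :
    Integrable (fun x : EuclideanSpace ℝ (Fin n) =>
        euclideanLaplacian f x * Real.exp (-(f x))) ∧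
    Integrable (fun x : EuclideanSpace ℝ (Fin n) =>
        ‖gradient f x‖ ^ 2 * Real.exp (-(f x))) ∧
    (∫ x : EuclideanSpace ℝ (Fin n), euclideanLaplacian f x * Real.exp (-(f x))) =
      ∫ x : EuclideanSpace ℝ (Fin n), ‖gradient f x‖ ^ 2 * Real.exp (-(f x)) := by
  classical
  have hψpos : ∀ x : EuclideanSpace ℝ (Fin n), 0 < Real.exp (-(f x)) := fun x => Real.exp_pos _
  have hψcont : Continuous fun x : EuclideanSpace ℝ (Fin n) => Real.exp (-(f x)) :=
    Real.continuous_exp.comp hf.continuous.neg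
  have hfC1 : ContDiff ℝ 1 (fderiv ℝ f) := hf.fderiv_right (by norm_num)
  have hgC1 : ∀ i : Fin n, ContDiff ℝ 1
      (fun x : EuclideanSpace ℝ (Fin n) => fderiv ℝ f x (EuclideanSpace.single i 1)) :=
    fun i => hfC1.clm_apply contDiff_const
  have hgradcont : Continuous fun x : EuclideanSpace ℝ (Fin n) => gradient f x :=
    (InnerProductSpace.toDual ℝ _).symm.continuous.comp hfC1.continuous
  have hLcont : Continuous (euclideanLaplacian f) := by
    have heq : euclideanLaplacian f = fun x => ∑ i : Fin n,
        fderiv ℝ (fun y => fderiv ℝ f y (EuclideanSpace.single i 1)) x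
          (EuclideanSpace.single i 1) := funext (aux_lap_eq hf)
    rw [heq]
    exact continuous_finset_sum _ fun i _ =>
      ((hgC1 i).continuous_fderiv one_ne_zero).clm_apply continuous_const
  -- decay bound
  obtain ⟨A, hA0, hAbound⟩ : ∃ A : ℝ, 0 ≤ A ∧ ∀ x : EuclideanSpace ℝ (Fin n),
      (1 + ‖x‖ ^ 2) * Real.exp (-(f x)) ≤ A * Real.exp (-(1/16) * ‖x‖ ^ 2) := by
    obtain ⟨x₀, _, hmin⟩ := (isCompact_closedBall (0 : EuclideanSpace ℝ (Fin n)) c).exists_isMinOn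
      ⟨0, by simpa using hc⟩ hf.continuous.continuousOn
    set m₁ : ℝ := max 0 ((1/4) * c ^ 2 - f x₀) with hm₁
    have h1 : ∀ x : EuclideanSpace ℝ (Fin n), (1/4) * (‖x‖ - c) ^ 2 - m₁ ≤ f x := by
      intro x
      rcases le_total c ‖x‖ with h | h
      · have h2 : (0:ℝ) ≤ m₁ := le_max_left _ _
        linarith [hgrowth x h]
      · have hx : x ∈ Metric.closedBall (0 : EuclideanSpace ℝ (Fin n)) c := by
          simpa [Metric.mem_closedBall, dist_zero_right] using h
        have h2 : f x₀ ≤ f x := hmin hx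
        have h3 : (1/4) * c ^ 2 - f x₀ ≤ m₁ := le_max_right _ _
        have h4 : (1/4) * (‖x‖ - c) ^ 2 ≤ (1/4) * c ^ 2 := by
          nlinarith [norm_nonneg x]
        linarith
    refine ⟨17 * Real.exp (m₁ + c ^ 2 / 4), by positivity, fun x => ?_⟩
    have e1 : Real.exp (-(f x)) ≤ Real.exp (m₁ - (1/4) * (‖x‖ - c) ^ 2) :=
      Real.exp_le_exp.2 (by linarith [h1 x])
    have e2 : Real.exp (m₁ - (1/4) * (‖x‖ - c) ^ 2) ≤
        Real.exp (m₁ + c ^ 2 / 4 - ‖x‖ ^ 2 / 8) :=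
      Real.exp_le_exp.2 (by nlinarith [sq_nonneg (‖x‖ - 2 * c)])
    have e3 : 1 + ‖x‖ ^ 2 ≤ 17 * Real.exp (‖x‖ ^ 2 / 16) := by
      have := Real.add_one_le_exp (‖x‖ ^ 2 / 16)
      nlinarith [sq_nonneg (‖x‖ ^ 2)]
    calc (1 + ‖x‖ ^ 2) * Real.exp (-(f x))
        ≤ (17 * Real.exp (‖x‖ ^ 2 / 16)) * Real.exp (m₁ + c ^ 2 / 4 - ‖x‖ ^ 2 / 8) :=
          mul_le_mul e3 (e1.trans e2) (le_of_lt (hψpos x)) (by positivity)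
      _ = 17 * Real.exp (m₁ + c ^ 2 / 4) * Real.exp (-(1/16) * ‖x‖ ^ 2) := by
          rw [mul_assoc, ← Real.exp_add, mul_assoc, ← Real.exp_add]
          ring_nf
  have hgauss := aux_gauss_int n
  -- integrability
  have hint1 : Integrable (fun x : EuclideanSpace ℝ (Fin n) =>
      euclideanLaplacian f x * Real.exp (-(f x))) := by
    apply (hgauss.const_mul (C * A)).mono' (hLcont.mul hψcont).aestronglyMeasurable
    filter_upwards with x
    simp only [Pi.mul_apply, Pi.pow_apply]
    rw [norm_mul, Real.norm_eq_abs, Real.norm_eq_abs, abs_of_pos (hψpos x)]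
    calc |euclideanLaplacian f x| * Real.exp (-(f x))
        ≤ (C * (1 + ‖x‖ ^ 2)) * Real.exp (-(f x)) :=
          mul_le_mul_of_nonneg_right (hlap x) (hψpos x).le
      _ = C * ((1 + ‖x‖ ^ 2) * Real.exp (-(f x))) := by ring
      _ ≤ C * (A * Real.exp (-(1/16) * ‖x‖ ^ 2)) :=
          mul_le_mul_of_nonneg_left (hAbound x) hC.le
      _ = C * A * Real.exp (-(1/16) * ‖x‖ ^ 2) := by ring
  have hint2 : Integrable (fun x : EuclideanSpace ℝ (Fin n) =>
      ‖gradient f x‖ ^ 2 * Real.exp (-(f x))) := by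
    apply (hgauss.const_mul (2 * C ^ 2 * A)).mono'
      (((hgradcont.norm.pow 2).mul hψcont)).aestronglyMeasurable
    filter_upwards with x
    simp only [Pi.mul_apply, Pi.pow_apply]
    rw [norm_mul, Real.norm_eq_abs, Real.norm_eq_abs, abs_of_pos (hψpos x),
      abs_of_nonneg (by positivity)]
    have h1 : ‖gradient f x‖ ^ 2 ≤ (C * (1 + ‖x‖)) ^ 2 :=
      pow_le_pow_left₀ (norm_nonneg _) (hgrad x) 2
    have h2 : (C * (1 + ‖x‖)) ^ 2 ≤ 2 * C ^ 2 * (1 + ‖x‖ ^ 2) := by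
      nlinarith [sq_nonneg (1 - ‖x‖), sq_nonneg C]
    calc ‖gradient f x‖ ^ 2 * Real.exp (-(f x))
        ≤ (2 * C ^ 2 * (1 + ‖x‖ ^ 2)) * Real.exp (-(f x)) :=
          mul_le_mul_of_nonneg_right (h1.trans h2) (hψpos x).le
      _ = 2 * C ^ 2 * ((1 + ‖x‖ ^ 2) * Real.exp (-(f x))) := by ring
      _ ≤ 2 * C ^ 2 * (A * Real.exp (-(1/16) * ‖x‖ ^ 2)) :=
          mul_le_mul_of_nonneg_left (hAbound x) (by positivity)
      _ = 2 * C ^ 2 * A * Real.exp (-(1/16) * ‖x‖ ^ 2) := by ring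
  have hint3 : Integrable (fun x : EuclideanSpace ℝ (Fin n) =>
      ‖gradient f x‖ * Real.exp (-(f x))) := by
    apply (hgauss.const_mul (2 * C * A)).mono'
      ((hgradcont.norm.mul hψcont)).aestronglyMeasurable
    filter_upwards with x
    simp only [Pi.mul_apply, Pi.pow_apply]
    rw [norm_mul, Real.norm_eq_abs, Real.norm_eq_abs, abs_of_pos (hψpos x),
      abs_of_nonneg (norm_nonneg _)]
    have h2 : C * (1 + ‖x‖) ≤ 2 * C * (1 + ‖x‖ ^ 2) := by
      nlinarith [sq_nonneg (1 - ‖x‖)]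
    calc ‖gradient f x‖ * Real.exp (-(f x))
        ≤ (2 * C * (1 + ‖x‖ ^ 2)) * Real.exp (-(f x)) :=
          mul_le_mul_of_nonneg_right ((hgrad x).trans h2) (hψpos x).le
      _ = 2 * C * ((1 + ‖x‖ ^ 2) * Real.exp (-(f x))) := by ring
      _ ≤ 2 * C * (A * Real.exp (-(1/16) * ‖x‖ ^ 2)) :=
          mul_le_mul_of_nonneg_left (hAbound x) (by positivity)
      _ = 2 * C * A * Real.exp (-(1/16) * ‖x‖ ^ 2) := by ring
  refine ⟨hint1, hint2, ?_⟩
  -- the scaled bump functions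
  set φ : ContDiffBump (0 : EuclideanSpace ℝ (Fin n)) := ⟨1, 2, one_pos, one_lt_two⟩ with hφdef
  have hφC1 : ContDiff ℝ 1 (⇑φ : EuclideanSpace ℝ (Fin n) → ℝ) := φ.contDiff
  obtain ⟨K, hK⟩ : ∃ K : ℝ, ∀ y, ‖fderiv ℝ (⇑φ) y‖ ≤ K :=
    (hφC1.continuous_fderiv one_ne_zero).bounded_above_of_compact_support (φ.hasCompactSupport.fderiv (𝕜 := ℝ))
  have hK0 : 0 ≤ K := le_trans (norm_nonneg _) (hK 0)
  set R : ℕ → ℝ := fun k => (k : ℝ) + 1 with hRdef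
  have hRpos : ∀ k, 0 < R k := fun k => by positivity
  have hR1 : ∀ k, 1 ≤ R k := fun k => le_add_of_nonneg_left (Nat.cast_nonneg k)
  set χ : ℕ → EuclideanSpace ℝ (Fin n) → ℝ := fun k x => φ ((R k)⁻¹ • x) with hχdef
  have hχC1 : ∀ k, ContDiff ℝ 1 (χ k) := fun k => hφC1.comp (contDiff_id.const_smul ((R k)⁻¹))
  have hχcs : ∀ k, HasCompactSupport (χ k) := fun k =>
    φ.hasCompactSupport.comp_homeomorph
      (Homeomorph.smulOfNeZero ((R k)⁻¹) (by positivity))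
  have hχ01 : ∀ k x, 0 ≤ χ k x ∧ χ k x ≤ 1 := fun k x => ⟨φ.nonneg, φ.le_one⟩
  have hχone : ∀ k x, ‖x‖ ≤ R k → χ k x = 1 := by
    intro k x hx
    apply φ.one_of_mem_closedBall
    rw [Metric.mem_closedBall, dist_zero_right, norm_smul, norm_inv, Real.norm_eq_abs,
      abs_of_pos (hRpos k)]
    show (R k)⁻¹ * ‖x‖ ≤ φ.rIn
    have : (R k)⁻¹ * ‖x‖ ≤ (R k)⁻¹ * R k :=
      mul_le_mul_of_nonneg_left hx (inv_nonneg.2 (hRpos k).le)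
    rw [inv_mul_cancel₀ (hRpos k).ne'] at this
    exact this
  have hχto1 : ∀ x, Filter.Tendsto (fun k => χ k x) Filter.atTop (nhds 1) := by
    intro x
    apply Filter.Tendsto.congr' _ (tendsto_const_nhds (x := (1:ℝ)))
    filter_upwards [Filter.eventually_ge_atTop ⌈‖x‖⌉₊] with k hk
    have h1 : ‖x‖ ≤ (⌈‖x‖⌉₊ : ℝ) := Nat.le_ceil _
    have h2 : ((⌈‖x‖⌉₊ : ℕ) : ℝ) ≤ (k : ℝ) := Nat.cast_le.2 hk
    have hk' : ‖x‖ ≤ R k := by simp only [hRdef]; linarith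
    exact (hχone k x hk').symm
  have hχfderiv : ∀ k x (v : EuclideanSpace ℝ (Fin n)),
      fderiv ℝ (χ k) x v = (R k)⁻¹ * fderiv ℝ (⇑φ) ((R k)⁻¹ • x) v := by
    intro k x v
    have h1 : HasFDerivAt (fun y : EuclideanSpace ℝ (Fin n) => (R k)⁻¹ • y)
        ((R k)⁻¹ • ContinuousLinearMap.id ℝ (EuclideanSpace ℝ (Fin n))) x :=
      (hasFDerivAt_id x).const_smul ((R k)⁻¹)
    have h2 : HasFDerivAt (χ k)
        ((fderiv ℝ (⇑φ) ((R k)⁻¹ • x)).comp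
          ((R k)⁻¹ • ContinuousLinearMap.id ℝ (EuclideanSpace ℝ (Fin n)))) x :=
      (((hφC1.differentiable one_ne_zero) _).hasFDerivAt).comp x h1
    rw [h2.fderiv]
    simp [smul_eq_mul]
  have hχd_bound : ∀ k x (v : EuclideanSpace ℝ (Fin n)),
      |fderiv ℝ (χ k) x v| ≤ K * ‖v‖ := by
    intro k x v
    rw [hχfderiv, abs_mul, abs_of_pos (by positivity : (0:ℝ) < (R k)⁻¹)]
    have h1 : |fderiv ℝ (⇑φ) ((R k)⁻¹ • x) v| ≤ K * ‖v‖ := by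
      refine le_trans ((fderiv ℝ (⇑φ) ((R k)⁻¹ • x)).le_opNorm v) ?_
      exact mul_le_mul_of_nonneg_right (hK _) (norm_nonneg _)
    have h2 : (R k)⁻¹ ≤ 1 := by
      rw [inv_le_one_iff₀]
      right; exact hR1 k
    calc (R k)⁻¹ * |fderiv ℝ (⇑φ) ((R k)⁻¹ • x) v|
        ≤ 1 * (K * ‖v‖) := mul_le_mul h2 h1 (abs_nonneg _) one_pos.le
      _ = K * ‖v‖ := one_mul _
  have hχd_zero : ∀ x (v : EuclideanSpace ℝ (Fin n)),
      ∀ᶠ k in Filter.atTop, fderiv ℝ (χ k) x v = 0 := by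
    intro x v
    filter_upwards [Filter.eventually_ge_atTop ⌈‖x‖⌉₊] with k hk
    have hxk : ‖x‖ < R k := by
      have : ‖x‖ ≤ (⌈‖x‖⌉₊ : ℝ) := Nat.le_ceil _
      have h2 : ((⌈‖x‖⌉₊ : ℕ) : ℝ) ≤ (k : ℝ) := Nat.cast_le.2 hk
      simp only [hRdef]
      linarith
    have hmem : (R k)⁻¹ • x ∈ Metric.ball (0 : EuclideanSpace ℝ (Fin n)) φ.rIn := by
      rw [Metric.mem_ball, dist_zero_right, norm_smul, norm_inv, Real.norm_eq_abs,
        abs_of_pos (hRpos k)]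
      show (R k)⁻¹ * ‖x‖ < φ.rIn
      have : (R k)⁻¹ * ‖x‖ < (R k)⁻¹ * R k := by
        apply mul_lt_mul_of_pos_left hxk (by positivity)
      rw [inv_mul_cancel₀ (hRpos k).ne'] at this
      exact this
    have hzero : fderiv ℝ (⇑φ) ((R k)⁻¹ • x) = 0 := by
      rw [(φ.eventuallyEq_one_of_mem_ball hmem).fderiv_eq]
      exact fderiv_const_apply 1
    rw [hχfderiv, hzero]
    simp
  -- the three limits
  have t1 : Filter.Tendsto
      (fun k => ∫ x, χ k x * (euclideanLaplacian f x * Real.exp (-(f x))))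
      Filter.atTop (nhds (∫ x : EuclideanSpace ℝ (Fin n),
        euclideanLaplacian f x * Real.exp (-(f x)))) := by
    apply tendsto_integral_of_dominated_convergence
      (fun x => |euclideanLaplacian f x * Real.exp (-(f x))|)
      (fun k => ((hχC1 k).continuous.mul (hLcont.mul hψcont)).aestronglyMeasurable)
      hint1.abs
    · intro k
      filter_upwards with x
      simp only [Pi.mul_apply, Pi.pow_apply]
      rw [norm_mul, Real.norm_eq_abs, Real.norm_eq_abs]
      have h01 := hχ01 k x
      exact mul_le_of_le_one_left (abs_nonneg _)
        (by rw [abs_of_nonneg h01.1]; exact h01.2)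
    · filter_upwards with x
      have h := (hχto1 x).mul_const (euclideanLaplacian f x * Real.exp (-(f x)))
      rw [one_mul] at h
      exact h
  have t2 : Filter.Tendsto
      (fun k => ∫ x, χ k x * (‖gradient f x‖ ^ 2 * Real.exp (-(f x))))
      Filter.atTop (nhds (∫ x : EuclideanSpace ℝ (Fin n),
        ‖gradient f x‖ ^ 2 * Real.exp (-(f x)))) := by
    apply tendsto_integral_of_dominated_convergence
      (fun x => |‖gradient f x‖ ^ 2 * Real.exp (-(f x))|)
      (fun k => ((hχC1 k).continuous.mul ((hgradcont.norm.pow 2).mul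
        hψcont)).aestronglyMeasurable)
      hint2.abs
    · intro k
      filter_upwards with x
      simp only [Pi.mul_apply, Pi.pow_apply]
      rw [norm_mul, Real.norm_eq_abs, Real.norm_eq_abs]
      have h01 := hχ01 k x
      exact mul_le_of_le_one_left (abs_nonneg _)
        (by rw [abs_of_nonneg h01.1]; exact h01.2)
    · filter_upwards with x
      have h := (hχto1 x).mul_const (‖gradient f x‖ ^ 2 * Real.exp (-(f x)))
      rw [one_mul] at h
      exact h
  have t3 : ∀ i : Fin n, Filter.Tendsto
      (fun k => ∫ x, fderiv ℝ (χ k) x (EuclideanSpace.single i 1) *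
        (fderiv ℝ f x (EuclideanSpace.single i 1) * Real.exp (-(f x))))
      Filter.atTop (nhds 0) := by
    intro i
    have h0 : (0:ℝ) = ∫ x : EuclideanSpace ℝ (Fin n), (0:ℝ) := by simp
    rw [h0]
    apply tendsto_integral_of_dominated_convergence
      (fun x => K * (‖gradient f x‖ * Real.exp (-(f x))))
      (fun k => ((((hχC1 k).continuous_fderiv one_ne_zero).clm_apply continuous_const).mul
        (((hgC1 i).continuous).mul hψcont)).aestronglyMeasurable)
      (hint3.const_mul K)
    · intro k
      filter_upwards with x
      simp only [Pi.mul_apply, Pi.pow_apply]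
      rw [norm_mul, Real.norm_eq_abs, Real.norm_eq_abs, abs_mul,
        abs_of_pos (hψpos x)]
      have hb := hχd_bound k x (EuclideanSpace.single i 1)
      rw [EuclideanSpace.norm_single, norm_one, mul_one] at hb
      have hga := aux_grad_abs f x i
      exact mul_le_mul hb (mul_le_mul_of_nonneg_right hga (hψpos x).le)
        (by positivity) hK0
    · filter_upwards with x
      apply Filter.Tendsto.congr' _ (tendsto_const_nhds (x := (0:ℝ)))
      filter_upwards [hχd_zero x (EuclideanSpace.single i 1)] with k hk
      simp only [Pi.mul_apply]
      rw [hk, zero_mul]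
  have tsum : Filter.Tendsto
      (fun k => ∑ i : Fin n, ∫ x, fderiv ℝ (χ k) x (EuclideanSpace.single i 1) *
        (fderiv ℝ f x (EuclideanSpace.single i 1) * Real.exp (-(f x))))
      Filter.atTop (nhds 0) := by
    have := tendsto_finset_sum (Finset.univ : Finset (Fin n)) (fun i _ => t3 i)
    simpa using this
  have hkey : ∀ k, ∫ x, χ k x * (euclideanLaplacian f x * Real.exp (-(f x))) =
      (∫ x, χ k x * (‖gradient f x‖ ^ 2 * Real.exp (-(f x)))) -
      ∑ i : Fin n, ∫ x, fderiv ℝ (χ k) x (EuclideanSpace.single i 1) *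
        (fderiv ℝ f x (EuclideanSpace.single i 1) * Real.exp (-(f x))) :=
    fun k => aux_key hf (hχC1 k) (hχcs k)
  have t1' : Filter.Tendsto
      (fun k => ∫ x, χ k x * (euclideanLaplacian f x * Real.exp (-(f x))))
      Filter.atTop (nhds ((∫ x : EuclideanSpace ℝ (Fin n),
        ‖gradient f x‖ ^ 2 * Real.exp (-(f x))) - 0)) := by
    apply Filter.Tendsto.congr' _ (t2.sub tsum)
    filter_upwards with k
    exact (hkey k).symm
  have := tendsto_nhds_unique t1 t1'
  rw [sub_zero] at this
  exact this
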